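/- Fix an integer d ≥ 2, an index 0 ≤ i ≤ d, and κ as below with κ'(1) < 1. Then, as L → ∞, M_i(L) converges to (2√π / Γ((d+1)/2)) · (η_1(1−κ'(1)))^{−d/2} · ∫_{ℝ^d} Π(λ)·𝟙_{O_i}(λ)·f_{(1+η_1(1−κ'(1)))/2}(λ) dλ. (Low-disorder regime of Theorem 3.2, stated via the Kac–Rice expression for the expected number of critical points of index i.) -/

import Mathlib

open MeasureTheory Filter Real

/-- `K_d := 2^{d/2} ∏_{j=1}^d Γ(j/2)`. -/
noncomputable def Kd (d : ℕ) : ℝ :=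
  2 ^ ((d : ℝ) / 2) * ∏ j ∈ Finset.Icc 1 d, Real.Gamma ((j : ℝ) / 2)

/-- `Π(λ) := ∏_{j=1}^d |λ_j|`. -/
noncomputable def PiAbs (d : ℕ) (lam : Fin d → ℝ) : ℝ := ∏ j, |lam j|

/-- `Δ(λ) := ∏_{1 ≤ h < k ≤ d} |λ_h − λ_k|`. -/
noncomputable def DeltaV (d : ℕ) (lam : Fin d → ℝ) : ℝ :=
  ∏ h : Fin d, ∏ k : Fin d, if h < k then |lam h - lam k| else 1

/-- The density of the ordered eigenvalues of a GOI(c) matrix. -/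
noncomputable def fGOI (d : ℕ) (c : ℝ) (lam : Fin d → ℝ) : ℝ :=
  (Kd d * Real.sqrt (1 + d * c))⁻¹ * DeltaV d lam *
    Real.exp (-(∑ j, lam j ^ 2) / 2 + c * (∑ j, lam j) ^ 2 / (2 * (1 + d * c))) *
    Set.indicator {x : Fin d → ℝ | Monotone x} (fun _ => 1) lam

/-- `O_i := {λ : λ_i < 0 < λ_{i+1}}` with conventions `λ_0 = −∞`, `λ_{d+1} = +∞`
(one-based indexing; coordinates here are zero-based). -/
def Oi (d i : ℕ) : Set (Fin d → ℝ) :=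
  {lam | (∀ j : Fin d, (j : ℕ) + 1 = i → lam j < 0) ∧ (∀ j : Fin d, (j : ℕ) = i → 0 < lam j)}

/-- `∫_{ℝ^d} Π(λ)·𝟙_{O_i}(λ)·f_c(λ) dλ`. -/
noncomputable def GOIint (d i : ℕ) (c : ℝ) : ℝ :=
  ∫ lam : Fin d → ℝ,
    PiAbs d lam * Set.indicator (Oi d i) (fun _ => 1) lam * fGOI d c lam

/-- `η_L := κ_L'(1)/κ_L''(1)` where `κ_L` is the `L`-fold iterate of `κ`. -/
noncomputable def etaL (κ : ℝ → ℝ) (L : ℕ) : ℝ :=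
  deriv (κ^[L]) 1 / deriv (deriv (κ^[L])) 1

/-- The Kac–Rice expression for the expected number of critical points of index `i`
of the depth-`L` limiting field on `S^d`. -/
noncomputable def Mcrit (d i : ℕ) (κ : ℝ → ℝ) (L : ℕ) : ℝ :=
  2 * Real.sqrt π / Real.Gamma (((d : ℝ) + 1) / 2) * etaL κ L ^ (-(d : ℝ) / 2) *
    GOIint d i ((1 + etaL κ L) / 2)

/-! ### Part A : derivatives of iterates -/

section IterDeriv
variable {κ : ℝ → ℝ}

lemma contDiff_iterate (h : ContDiff ℝ 2 κ) (L : ℕ) : ContDiff ℝ 2 (κ^[L]) := by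
  induction L with
  | zero => simpa using contDiff_id
  | succ n ih => rw [Function.iterate_succ']; exact h.comp ih

lemma diff_of_cd2 (h : ContDiff ℝ 2 κ) : Differentiable ℝ κ :=
  h.differentiable (by norm_num)

lemma diff_deriv_of_cd2 (h : ContDiff ℝ 2 κ) : Differentiable ℝ (deriv κ) := by
  have h2 : (2 : WithTop ℕ∞) = 1 + 1 := by norm_num
  rw [h2, contDiff_succ_iff_deriv] at h
  exact h.2.2.differentiable one_ne_zero

lemma iter_fix (hfix : κ 1 = 1) (L : ℕ) : κ^[L] 1 = 1 := by
  induction L with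
  | zero => simp
  | succ n ih => rw [Function.iterate_succ']; simp [Function.comp, ih, hfix]

lemma deriv_iterate (h : ContDiff ℝ 2 κ) (hfix : κ 1 = 1) (L : ℕ) :
    deriv (κ^[L]) 1 = (deriv κ 1) ^ L := by
  induction L with
  | zero => simp
  | succ n ih =>
    rw [Function.iterate_succ']
    rw [deriv_comp 1 (diff_of_cd2 h _) ((contDiff_iterate h n).differentiable (by norm_num) _)]
    rw [iter_fix hfix, ih, pow_succ, mul_comm]

lemma deriv_iterate_succ (h : ContDiff ℝ 2 κ) (n : ℕ) :
    deriv (κ^[n+1]) = fun x => deriv κ (κ^[n] x) * deriv (κ^[n]) x := by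
  funext x
  rw [Function.iterate_succ']
  exact deriv_comp x (diff_of_cd2 h _) ((contDiff_iterate h n).differentiable (by norm_num) _)

lemma deriv2_iterate (h : ContDiff ℝ 2 κ) (hfix : κ 1 = 1)
    (ha0 : deriv κ 1 ≠ 0) (ha1 : deriv κ 1 ≠ 1) (L : ℕ) :
    deriv (deriv (κ^[L])) 1 =
      deriv (deriv κ) 1 / deriv κ 1 * (deriv κ 1) ^ L * (1 - (deriv κ 1) ^ L)
        / (1 - deriv κ 1) := by
  set a := deriv κ 1
  set b := deriv (deriv κ) 1
  induction L with
  | zero => simp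
  | succ n ih =>
    have hgd : Differentiable ℝ (κ^[n]) := (contDiff_iterate h n).differentiable (by norm_num)
    have hgd2 : Differentiable ℝ (deriv (κ^[n])) := diff_deriv_of_cd2 (contDiff_iterate h n)
    have hκ2 : Differentiable ℝ (deriv κ) := diff_deriv_of_cd2 h
    rw [deriv_iterate_succ h n]
    have hmul : HasDerivAt (fun x => deriv κ (κ^[n] x) * deriv (κ^[n]) x)
        ((deriv (deriv κ) (κ^[n] 1) * deriv (κ^[n]) 1) * deriv (κ^[n]) 1
          + deriv κ (κ^[n] 1) * deriv (deriv (κ^[n])) 1) 1 :=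
      (((hκ2 (κ^[n] 1)).hasDerivAt).comp 1 ((hgd 1).hasDerivAt)).mul ((hgd2 1).hasDerivAt)
    rw [hmul.deriv, iter_fix hfix, deriv_iterate h hfix, ih]
    have h1a : (1 : ℝ) - a ≠ 0 := fun hc => ha1 (by linarith)
    field_simp
    ring

lemma etaL_eq (h : ContDiff ℝ 2 κ) (hfix : κ 1 = 1)
    (ha : 0 < deriv κ 1) (ha1 : deriv κ 1 < 1) (hb : 0 < deriv (deriv κ) 1) (L : ℕ) :
    etaL κ L = deriv κ 1 * (1 - deriv κ 1) /
      (deriv (deriv κ) 1 * (1 - (deriv κ 1) ^ L)) := by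
  set a := deriv κ 1
  set b := deriv (deriv κ) 1
  rw [etaL, deriv_iterate h hfix, deriv2_iterate h hfix ha.ne' ha1.ne]
  cases L with
  | zero => simp
  | succ n =>
    have hpow : (0:ℝ) < a ^ (n+1) := pow_pos ha _
    have hlt : a ^ (n+1) < 1 := pow_lt_one₀ ha.le ha1 (Nat.succ_ne_zero n)
    have h1 : (1:ℝ) - a ^ (n+1) ≠ 0 := by linarith
    have h2 : (1:ℝ) - a ≠ 0 := by linarith
    simp only [show deriv κ 1 = a from rfl, show deriv (deriv κ) 1 = b from rfl]
    field_simp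

lemma etaL_tendsto (h : ContDiff ℝ 2 κ) (hfix : κ 1 = 1)
    (ha : 0 < deriv κ 1) (ha1 : deriv κ 1 < 1) (hb : 0 < deriv (deriv κ) 1) :
    Tendsto (fun L => etaL κ L) atTop
      (nhds (deriv κ 1 / deriv (deriv κ) 1 * (1 - deriv κ 1))) := by
  set a := deriv κ 1
  set b := deriv (deriv κ) 1
  have h0 : Tendsto (fun L : ℕ => a ^ L) atTop (nhds 0) :=
    tendsto_pow_atTop_nhds_zero_of_lt_one ha.le ha1
  have key : Tendsto (fun L : ℕ => a * (1 - a) / (b * (1 - a ^ L))) atTop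
      (nhds (a * (1 - a) / (b * (1 - 0)))) := by
    apply Tendsto.div tendsto_const_nhds
      (tendsto_const_nhds.mul (tendsto_const_nhds.sub h0))
    simp [hb.ne']
  have heq : (fun L : ℕ => etaL κ L) = fun L : ℕ => a * (1 - a) / (b * (1 - a ^ L)) := by
    funext L; exact etaL_eq h hfix ha ha1 hb L
  rw [heq]
  convert key using 2
  field_simp
  ring

end IterDeriv

/-! ### Part B : continuity of the GOI integral -/

lemma Kd_pos (d : ℕ) : 0 < Kd d := by
  apply mul_pos (rpow_pos_of_pos two_pos _)
  apply Finset.prod_pos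
  intro j hj
  apply Real.Gamma_pos_of_pos
  have : 1 ≤ j := (Finset.mem_Icc.mp hj).1
  positivity

lemma continuous_PiAbs (d : ℕ) : Continuous (PiAbs d) :=
  continuous_finset_prod _ fun j _ => (continuous_apply j).abs

lemma continuous_DeltaV (d : ℕ) : Continuous (DeltaV d) := by
  apply continuous_finset_prod _ fun h _ => ?_
  apply continuous_finset_prod _ fun k _ => ?_
  split_ifs
  · exact ((continuous_apply h).sub (continuous_apply k)).abs
  · exact continuous_const

lemma DeltaV_nonneg (d : ℕ) (lam : Fin d → ℝ) : 0 ≤ DeltaV d lam := by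
  apply Finset.prod_nonneg fun h _ => Finset.prod_nonneg fun k _ => ?_
  split_ifs
  · exact abs_nonneg _
  · exact zero_le_one

lemma PiAbs_nonneg (d : ℕ) (lam : Fin d → ℝ) : 0 ≤ PiAbs d lam :=
  Finset.prod_nonneg fun j _ => abs_nonneg _

lemma measurableSet_Oi (d i : ℕ) : MeasurableSet (Oi d i) := by
  have : Oi d i = (⋂ j : Fin d, {lam : Fin d → ℝ | (j:ℕ)+1 = i → lam j < 0}) ∩
      ⋂ j : Fin d, {lam : Fin d → ℝ | (j:ℕ) = i → 0 < lam j} := by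
    ext lam; simp [Oi, Set.mem_iInter]
  rw [this]
  apply MeasurableSet.inter <;> apply MeasurableSet.iInter <;> intro j
  · by_cases h : (j:ℕ)+1 = i
    · simp only [h]
      simpa using measurableSet_lt (measurable_pi_apply j) measurable_const
    · simp [h]
  · by_cases h : (j:ℕ) = i
    · simp only [h]
      simpa using measurableSet_lt measurable_const (measurable_pi_apply j)
    · simp [h]

lemma measurableSet_mono (d : ℕ) : MeasurableSet {x : Fin d → ℝ | Monotone x} := by
  have : {x : Fin d → ℝ | Monotone x} =
      ⋂ p : Fin d, ⋂ q : Fin d, {x : Fin d → ℝ | p ≤ q → x p ≤ x q} := by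
    ext x
    simp only [Set.mem_setOf_eq, Set.mem_iInter, Monotone]
  rw [this]
  apply MeasurableSet.iInter; intro p
  apply MeasurableSet.iInter; intro q
  by_cases h : p ≤ q
  · simp only [h]
    simpa using measurableSet_le (measurable_pi_apply p) (measurable_pi_apply q)
  · simp [h]

lemma integrable_pow_gauss (n : ℕ) {b : ℝ} (hb : 0 < b) :
    Integrable fun t : ℝ => t ^ n * Real.exp (-b * t ^ 2) := by
  have := integrable_rpow_mul_exp_neg_mul_sq hb (s := (n : ℝ))
    (by linarith [Nat.cast_nonneg (α:=ℝ) n] : (-1:ℝ) < (n:ℝ))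
  simpa [Real.rpow_natCast] using this

lemma integrable_poly_gauss (m : ℕ) {b : ℝ} (hb : 0 < b) :
    Integrable fun t : ℝ => (1 + t ^ 2) ^ m * Real.exp (-b * t ^ 2) := by
  have key : ∀ t : ℝ, (1 + t ^ 2) ^ m * Real.exp (-b * t ^ 2) =
      ∑ k ∈ Finset.range (m + 1),
        (Nat.choose m k : ℝ) * (t ^ (2 * (m - k)) * Real.exp (-b * t ^ 2)) := by
    intro t
    rw [add_pow, Finset.sum_mul]
    apply Finset.sum_congr rfl
    intro k hk
    rw [pow_mul]
    ring
  simp_rw [key]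
  exact integrable_finset_sum _ fun k _ => (integrable_pow_gauss _ hb).const_mul _

lemma one_le_prod_real {ι : Type*} {s : Finset ι} {f : ι → ℝ} (h : ∀ i ∈ s, 1 ≤ f i) :
    1 ≤ ∏ i ∈ s, f i := by
  classical
  induction s using Finset.induction_on with
  | empty => simp
  | insert _ _ hx ih =>
    rw [Finset.prod_insert hx]
    have h1 := h _ (Finset.mem_insert_self _ _)
    have h2 := ih fun i hi => h i (Finset.mem_insert_of_mem hi)
    nlinarith

lemma single_le_prod_real {ι : Type*} {s : Finset ι} {f : ι → ℝ} (h : ∀ i ∈ s, 1 ≤ f i)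
    {j : ι} (hj : j ∈ s) : f j ≤ ∏ i ∈ s, f i := by
  classical
  rw [← Finset.mul_prod_erase s f hj]
  have h1 : 1 ≤ ∏ i ∈ s.erase j, f i :=
    one_le_prod_real fun i hi => h i (Finset.mem_of_mem_erase hi)
  nlinarith [h j hj]

lemma continuousAt_GOIint (d i : ℕ) {c₀ : ℝ} (hc : 0 < c₀) :
    ContinuousAt (fun c => GOIint d i c) c₀ := by
  have hd0 : (0:ℝ) ≤ (d:ℝ) := Nat.cast_nonneg d
  set m := d * d + 1 with hm
  set ε := (2 * (1 + (d:ℝ) * (c₀ + 1)))⁻¹ with hε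
  have hεpos : 0 < ε := by rw [hε]; positivity
  set Vmin := (Kd d * Real.sqrt (1 + (d:ℝ) * (c₀ / 2)))⁻¹ with hVmin
  have hVminpos : 0 < Vmin := by
    rw [hVmin]
    apply inv_pos.mpr
    exact mul_pos (Kd_pos d) (Real.sqrt_pos.mpr (by positivity))
  set C0 := Vmin * 2 ^ (d * d) with hC0
  set bound := fun lam : Fin d → ℝ =>
    C0 * ∏ j, ((1 + lam j ^ 2) ^ m * Real.exp (-ε * lam j ^ 2)) with hbound
  set F := fun (c : ℝ) (lam : Fin d → ℝ) =>
    PiAbs d lam * Set.indicator (Oi d i) (fun _ => 1) lam * fGOI d c lam with hF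
  have hmeas : ∀ c : ℝ, AEStronglyMeasurable (F c) volume := by
    intro c
    apply Measurable.aestronglyMeasurable
    apply Measurable.mul
    · exact ((continuous_PiAbs d).measurable).mul
        (measurable_const.indicator (measurableSet_Oi d i))
    · unfold fGOI
      apply Measurable.mul
      · apply Measurable.mul
        · exact measurable_const.mul (continuous_DeltaV d).measurable
        · apply Measurable.exp
          apply Measurable.add
          · exact (Finset.measurable_sum _ fun j _ =>
              (measurable_pi_apply j).pow measurable_const).neg.div_const 2
          · exact ((((Finset.measurable_sum _ fun j _ =>
              measurable_pi_apply j)).pow measurable_const).const_mul c).div_const _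
      · exact measurable_const.indicator (measurableSet_mono d)
  -- nonnegativity of F
  have hind1 : ∀ (s : Set (Fin d → ℝ)) lam, Set.indicator s (fun _ => (1:ℝ)) lam ≤ 1 :=
    fun s lam => Set.indicator_apply_le' (fun _ => le_rfl) (fun _ => zero_le_one)
  have hind0 : ∀ (s : Set (Fin d → ℝ)) lam, 0 ≤ Set.indicator s (fun _ => (1:ℝ)) lam :=
    fun s lam => Set.indicator_nonneg (fun _ _ => zero_le_one) lam
  have hF_nonneg : ∀ c lam, 0 < 1 + (d:ℝ) * c → 0 ≤ F c lam := by
    intro c lam hcd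
    apply mul_nonneg (mul_nonneg (PiAbs_nonneg d lam) (hind0 _ _))
    unfold fGOI
    apply mul_nonneg (mul_nonneg (mul_nonneg _ (DeltaV_nonneg d lam)) (Real.exp_pos _).le)
      (hind0 _ _)
    exact inv_nonneg.mpr (mul_nonneg (Kd_pos d).le (Real.sqrt_nonneg _))
  apply continuousAt_of_dominated (bound := bound)
  · exact Eventually.of_forall hmeas
  · have hIoo : Set.Ioo (c₀ / 2) (c₀ + 1) ∈ nhds c₀ :=
      Ioo_mem_nhds (by linarith) (by linarith)
    filter_upwards [hIoo] with c hc'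
    apply Eventually.of_forall
    intro lam
    obtain ⟨hc1, hc2⟩ := hc'
    have hcpos : 0 < c := lt_trans (by linarith) hc1
    have hcd : (0:ℝ) < 1 + (d:ℝ) * c := by positivity
    have hcdM : (0:ℝ) < 1 + (d:ℝ) * (c₀ + 1) := by positivity
    set G := ∏ j, (1 + lam j ^ 2) with hG
    have hGj : ∀ j, 1 + lam j ^ 2 ≤ G := fun j =>
      single_le_prod_real (f := fun k => 1 + lam k ^ 2)
        (fun k _ => le_add_of_nonneg_right (sq_nonneg _)) (Finset.mem_univ j)
    have hG1 : (1:ℝ) ≤ G :=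
      one_le_prod_real fun j _ => le_add_of_nonneg_right (sq_nonneg _)
    have habs : ∀ j, |lam j| ≤ 1 + lam j ^ 2 := by
      intro j
      nlinarith [sq_nonneg (|lam j| - 1), sq_abs (lam j)]
    have hA : PiAbs d lam ≤ G :=
      Finset.prod_le_prod (fun j _ => abs_nonneg _) (fun j _ => habs j)
    have hΔ : DeltaV d lam ≤ (2 * G) ^ (d * d) := by
      have step : DeltaV d lam ≤ ∏ _h : Fin d, ∏ _k : Fin d, (2 * G) := by
        apply Finset.prod_le_prod
          (fun h _ => Finset.prod_nonneg fun k _ => by split_ifs; exacts [abs_nonneg _, zero_le_one])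
        intro h _
        apply Finset.prod_le_prod (fun k _ => by split_ifs; exacts [abs_nonneg _, zero_le_one])
        intro k _
        split_ifs
        · calc |lam h - lam k| ≤ |lam h| + |lam k| := abs_sub _ _
            _ ≤ (1 + lam h ^ 2) + (1 + lam k ^ 2) := add_le_add (habs h) (habs k)
            _ ≤ G + G := add_le_add (hGj h) (hGj k)
            _ = 2 * G := by ring
        · linarith
      calc DeltaV d lam ≤ ∏ _h : Fin d, ∏ _k : Fin d, (2 * G) := step
        _ = (2 * G) ^ (d * d) := by
            simp [Finset.prod_const, Finset.card_univ, ← pow_mul]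
    set Q := ∑ j, lam j ^ 2 with hQ
    have hQ0 : 0 ≤ Q := Finset.sum_nonneg fun j _ => sq_nonneg _
    set S := ∑ j, lam j with hS
    have hS2 : S ^ 2 ≤ (d:ℝ) * Q := by
      have := sq_sum_le_card_mul_sum_sq (s := (Finset.univ : Finset (Fin d))) (f := lam)
      simpa [Finset.card_univ] using this
    have hexp : Real.exp (-(Q) / 2 + c * S ^ 2 / (2 * (1 + (d:ℝ) * c)))
        ≤ Real.exp (-ε * Q) := by
      apply Real.exp_le_exp.mpr
      have step1 : c * S ^ 2 / (2 * (1 + (d:ℝ) * c))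
          ≤ (c₀ + 1) * S ^ 2 / (2 * (1 + (d:ℝ) * (c₀ + 1))) := by
        rw [div_le_div_iff₀ (by positivity) (by positivity)]
        nlinarith [sq_nonneg S, mul_nonneg (mul_nonneg hd0 (sq_nonneg S)) (le_of_lt hcpos)]
      have step2 : (c₀ + 1) * S ^ 2 / (2 * (1 + (d:ℝ) * (c₀ + 1)))
          ≤ (c₀ + 1) * ((d:ℝ) * Q) / (2 * (1 + (d:ℝ) * (c₀ + 1))) := by
        gcongr
      have final : -(Q) / 2 + (c₀ + 1) * ((d:ℝ) * Q) / (2 * (1 + (d:ℝ) * (c₀ + 1)))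
          = -ε * Q := by
        rw [hε]
        field_simp
        ring
      linarith
    have hV : (Kd d * Real.sqrt (1 + (d:ℝ) * c))⁻¹ ≤ Vmin := by
      rw [hVmin]
      apply inv_anti₀
      · exact mul_pos (Kd_pos d) (Real.sqrt_pos.mpr (by positivity))
      · apply mul_le_mul_of_nonneg_left _ (Kd_pos d).le
        apply Real.sqrt_le_sqrt
        have : c₀ / 2 ≤ c := le_of_lt hc1
        nlinarith
    -- assemble
    rw [Real.norm_eq_abs, abs_of_nonneg (hF_nonneg c lam hcd)]
    have hVpos : (0:ℝ) ≤ (Kd d * Real.sqrt (1 + (d:ℝ) * c))⁻¹ :=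
      inv_nonneg.mpr (mul_nonneg (Kd_pos d).le (Real.sqrt_nonneg _))
    have hW : fGOI d c lam ≤ Vmin * (2 * G) ^ (d * d) * Real.exp (-ε * Q) := by
      unfold fGOI
      calc (Kd d * Real.sqrt (1 + (d:ℝ) * c))⁻¹ * DeltaV d lam *
            Real.exp (-(∑ j, lam j ^ 2) / 2 + c * (∑ j, lam j) ^ 2 / (2 * (1 + (d:ℝ) * c))) *
            Set.indicator {x : Fin d → ℝ | Monotone x} (fun _ => 1) lam
          ≤ (Kd d * Real.sqrt (1 + (d:ℝ) * c))⁻¹ * DeltaV d lam *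
            Real.exp (-(∑ j, lam j ^ 2) / 2 + c * (∑ j, lam j) ^ 2 / (2 * (1 + (d:ℝ) * c))) * 1 := by
            apply mul_le_mul_of_nonneg_left (hind1 _ _)
            exact mul_nonneg (mul_nonneg hVpos (DeltaV_nonneg d lam)) (Real.exp_pos _).le
        _ ≤ Vmin * (2 * G) ^ (d * d) * Real.exp (-ε * Q) := by
            rw [mul_one]
            apply mul_le_mul (mul_le_mul hV hΔ (DeltaV_nonneg d lam) hVminpos.le)
              hexp (Real.exp_pos _).le
            positivity
    have hfinal : PiAbs d lam * Set.indicator (Oi d i) (fun _ => 1) lam * fGOI d c lam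
        ≤ G * (Vmin * (2 * G) ^ (d * d) * Real.exp (-ε * Q)) := by
      apply mul_le_mul _ hW _ (by positivity)
      · calc PiAbs d lam * Set.indicator (Oi d i) (fun _ => 1) lam
            ≤ PiAbs d lam * 1 := mul_le_mul_of_nonneg_left (hind1 _ _) (PiAbs_nonneg d lam)
          _ = PiAbs d lam := mul_one _
          _ ≤ G := hA
      · unfold fGOI
        apply mul_nonneg (mul_nonneg (mul_nonneg hVpos (DeltaV_nonneg d lam))
          (Real.exp_pos _).le) (hind0 _ _)
    have hprod : ∏ j, ((1 + lam j ^ 2) ^ m * Real.exp (-ε * lam j ^ 2))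
        = G ^ m * Real.exp (-ε * Q) := by
      rw [Finset.prod_mul_distrib, ← Finset.prod_pow, ← Real.exp_sum]
      congr 1
      rw [hQ, Finset.mul_sum]
    have hbeq : bound lam = G * (Vmin * (2 * G) ^ (d * d) * Real.exp (-ε * Q)) := by
      rw [hbound]
      simp only
      rw [hprod, hC0, hm, mul_pow, pow_succ]
      ring
    rw [hbeq]
    exact hfinal
  · apply Integrable.const_mul
    exact Integrable.fintype_prod (f := fun (_ : Fin d) (t : ℝ) =>
      (1 + t ^ 2) ^ m * Real.exp (-ε * t ^ 2)) fun _ => integrable_poly_gauss m hεpos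
  · apply Eventually.of_forall
    intro lam
    apply ContinuousAt.mul continuousAt_const
    unfold fGOI
    have hcd₀ : (0:ℝ) < 1 + (d:ℝ) * c₀ := by positivity
    apply ContinuousAt.mul _ continuousAt_const
    apply ContinuousAt.mul
    · apply ContinuousAt.mul _ continuousAt_const
      apply ContinuousAt.inv₀
      · exact continuousAt_const.mul
          ((Real.continuous_sqrt.comp (continuous_const.add
            (continuous_const.mul continuous_id))).continuousAt)
      · exact (mul_pos (Kd_pos d) (Real.sqrt_pos.mpr hcd₀)).ne'
    · apply Real.continuous_exp.continuousAt.comp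
      apply ContinuousAt.add continuousAt_const
      apply ContinuousAt.div
      · exact (continuous_id.mul continuous_const).continuousAt
      · exact (continuous_const.mul (continuous_const.add
          (continuous_const.mul continuous_id))).continuousAt
      · positivity

/-- Low-disorder regime of Theorem 3.2: if `κ'(1) < 1` then `M_i(L)` converges. -/
theorem statement0 (d i : ℕ) (hd : 2 ≤ d) (hi : i ≤ d) (κ : ℝ → ℝ)
    (hsmooth : ContDiff ℝ 2 κ) (hfix : κ 1 = 1)
    (hpos1 : 0 < deriv κ 1) (hpos2 : 0 < deriv (deriv κ) 1)
    (hlow : deriv κ 1 < 1) :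
    Tendsto (fun L : ℕ => Mcrit d i κ L) atTop
      (nhds (2 * Real.sqrt π / Real.Gamma (((d : ℝ) + 1) / 2) *
        (deriv κ 1 / deriv (deriv κ) 1 * (1 - deriv κ 1)) ^ (-(d : ℝ) / 2) *
        GOIint d i ((1 + deriv κ 1 / deriv (deriv κ) 1 * (1 - deriv κ 1)) / 2))) := by
  set a := deriv κ 1 with ha
  set b := deriv (deriv κ) 1 with hb
  have hη : 0 < a / b * (1 - a) := mul_pos (div_pos hpos1 hpos2) (by linarith)
  have hc₀ : (0:ℝ) < (1 + a / b * (1 - a)) / 2 := by linarith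
  have htend : Tendsto (fun L => etaL κ L) atTop (nhds (a / b * (1 - a))) :=
    etaL_tendsto hsmooth hfix hpos1 hlow hpos2
  have hcont : ContinuousAt (fun η : ℝ =>
      2 * Real.sqrt π / Real.Gamma (((d : ℝ) + 1) / 2) * η ^ (-(d : ℝ) / 2) *
        GOIint d i ((1 + η) / 2)) (a / b * (1 - a)) := by
    apply ContinuousAt.mul
    · apply ContinuousAt.mul continuousAt_const
      exact Real.continuousAt_rpow_const _ _ (Or.inl hη.ne')
    · have hinner : ContinuousAt (fun η : ℝ => (1 + η) / 2) (a / b * (1 - a)) := by fun_prop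
      have houter : ContinuousAt (fun c => GOIint d i c)
          ((fun η : ℝ => (1 + η) / 2) (a / b * (1 - a))) := continuousAt_GOIint d i hc₀
      exact ContinuousAt.comp (g := fun c => GOIint d i c)
        (f := fun η : ℝ => (1 + η) / 2) houter hinner
  have := hcont.tendsto.comp htend
  simpa [Mcrit, Function.comp_def] using this
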